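/- Let G be a finite metabelian group with a maximal abelian normal subgroup K containing G', and let F = algebraically closed field of characteristic 0. Then every faithful irreducible F-representation of G is induced from a one-dimensional representation of K. -/

import Mathlib

open Pointwise
open Module
open scoped commutatorElement

/-- Common eigenvector for a finite commuting family over an alg. closed field. -/
private lemma aux_eigen {F V : Type} [Field F] [IsAlgClosed F] [AddCommGroup V] [Module F V]
    [FiniteDimensional F V] [Nontrivial V] {ι : Type} [Fintype ι]
    (f : ι → Module.End F V) (hcomm : ∀ i j, f i * f j = f j * f i) :
    ∃ (c : ι → F) (w : V), w ≠ 0 ∧ ∀ i, f i w = c i • w := by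
  classical
  have main : ∀ s : Finset ι, ∃ (U : Submodule F V) (c : ι → F), U ≠ ⊥ ∧
      (∀ i, ∀ u ∈ U, f i u ∈ U) ∧ (∀ i ∈ s, ∀ u ∈ U, f i u = c i • u) := by
    intro s
    induction s using Finset.induction_on with
    | empty =>
        refine ⟨⊤, fun _ => 0, ?_, fun _ _ _ => Submodule.mem_top, by simp⟩
        obtain ⟨x, hx⟩ := exists_ne (0 : V)
        exact Submodule.ne_bot_iff _ |>.mpr ⟨x, Submodule.mem_top, hx⟩
    | @insert j s hj ih =>
        obtain ⟨U, c, hU0, hinv, hc⟩ := ih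
        haveI : Nontrivial U := Submodule.nontrivial_iff_ne_bot.mpr hU0
        set g : Module.End F U := (f j).restrict (hinv j) with hg
        obtain ⟨μ, hμ⟩ := Module.End.exists_eigenvalue g
        obtain ⟨v, hv⟩ := hμ.exists_hasEigenvector
        have hvV : f j (v : V) = μ • (v : V) := by
          have := hv.apply_eq_smul
          have h2 : ((g v : U) : V) = f j (v : V) := LinearMap.restrict_coe_apply _ _ _
          rw [this] at h2
          simpa using h2.symm
        refine ⟨U ⊓ Module.End.eigenspace (f j) μ, Function.update c j μ, ?_, ?_, ?_⟩
        · rw [Submodule.ne_bot_iff]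
          refine ⟨(v : V), ⟨v.2, Module.End.mem_eigenspace_iff.mpr hvV⟩, ?_⟩
          simpa using hv.2
        · rintro i u ⟨huU, hue⟩
          refine ⟨hinv i u huU, Module.End.mem_eigenspace_iff.mpr ?_⟩
          have hue' : f j u = μ • u := Module.End.mem_eigenspace_iff.mp hue
          calc f j (f i u) = (f j * f i) u := rfl
            _ = (f i * f j) u := by rw [hcomm]
            _ = f i (μ • u) := by simp [Module.End.mul_apply, hue']
            _ = μ • f i u := by rw [map_smul]
        · intro i hi u hu
          rcases Finset.mem_insert.mp hi with h | h
          · subst h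
            rw [Function.update_self]
            exact Module.End.mem_eigenspace_iff.mp hu.2
          · rw [Function.update_of_ne (by rintro rfl; exact hj h)]
            exact hc i h u hu.1
  obtain ⟨U, c, hU0, _, hc⟩ := main Finset.univ
  obtain ⟨w, hwU, hw0⟩ := Submodule.ne_bot_iff U |>.mp hU0
  exact ⟨c, w, hw0, fun i => hc i (Finset.mem_univ i) w hwU⟩

private lemma aux_charsum {K : Type} [Group K] [Fintype K] {F : Type} [Field F]
    (ψ : K → F) (hmul : ∀ a b, ψ (a * b) = ψ a * ψ b) (k1 : K) (h1 : ψ k1 ≠ 1) :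
    ∑ k, ψ k = 0 := by
  have h2 : ψ k1 * ∑ k, ψ k = ∑ k, ψ k := by
    calc ψ k1 * ∑ k, ψ k = ∑ k, ψ (k1 * k) := by
          rw [Finset.mul_sum]
          exact Finset.sum_congr rfl (fun k _ => (hmul k1 k).symm)
      _ = ∑ k, ψ k := Equiv.sum_comp (Equiv.mulLeft k1) ψ
  have h3 : (ψ k1 - 1) * ∑ k, ψ k = 0 := by linear_combination h2
  rcases mul_eq_zero.mp h3 with h | h
  · exact absurd (by linear_combination h) h1
  · exact h

/-- Let `G` be a finite metabelian group with a maximal abelian normal subgroup `K`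
containing `G'`, and `F` an algebraically closed field of characteristic 0. Then every
faithful irreducible `F`-representation of `G` is induced from a one-dimensional
representation of `K`: there is a character `lam : K → F*` and a `K`-stable line `W ⊆ V`
on which `K` acts via `lam`, with `dim V = [G : K]` (so `V ≅ Ind_K^G lam`). -/
theorem stmt_9 (G : Type) [Group G] [Finite G]
    (hmeta : ∀ a b : commutator G, a * b = b * a)
    (K : Subgroup G) (hKn : K.Normal)
    (hKab : ∀ a b : G, a ∈ K → b ∈ K → a * b = b * a)
    (hGK : commutator G ≤ K)
    (hmax : ∀ K' : Subgroup G, K'.Normal →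
      (∀ a b : G, a ∈ K' → b ∈ K' → a * b = b * a) → K ≤ K' → K' = K)
    (F : Type) [Field F] [IsAlgClosed F] [CharZero F]
    (V : Type) [AddCommGroup V] [Module F V] [FiniteDimensional F V]
    (ρ : Representation F G V) (hfaith : Function.Injective ρ)
    (hirr : IsSimpleModule (MonoidAlgebra F G) ρ.asModule) :
    ∃ lam : K →* F, ∃ W : Submodule F V, Module.finrank F W = 1 ∧
      (∀ k : K, ∀ w ∈ W, ρ (k : G) w = lam k • w) ∧
      Module.finrank F V = K.index := by
  classical
  cases nonempty_fintype G
  haveI hVnt : Nontrivial V := IsSimpleModule.nontrivial (MonoidAlgebra F G) ρ.asModule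
  -- Step 1: common eigenvector for K
  obtain ⟨c, w, hw0, hcw⟩ := aux_eigen (fun k : K => ρ (k : G))
    (fun k k' => by rw [← map_mul, ← map_mul, hKab _ _ k.2 k'.2])
  have hscal : ∀ (a b : F), a • w = b • w → a = b := by
    intro a b hab
    have h1 : (a - b) • w = 0 := by rw [sub_smul, hab, sub_self]
    exact sub_eq_zero.mp ((smul_eq_zero.mp h1).resolve_right hw0)
  let lam : K →* F :=
    { toFun := c
      map_one' := by
        refine hscal _ _ ?_
        rw [← hcw 1]
        simp
      map_mul' := by
        intro k k'
        refine hscal _ _ ?_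
        rw [← hcw (k * k')]
        push_cast [map_mul]
        rw [Module.End.mul_apply, hcw k', map_smul, hcw k, smul_smul, mul_comm] }
  have hcw' : ∀ k : K, ρ (k : G) w = lam k • w := hcw

  have hlam0 : ∀ k : K, lam k ≠ 0 := by
    intro k
    have h1 : lam k * lam k⁻¹ = 1 := by rw [← map_mul, mul_inv_cancel, map_one]
    exact left_ne_zero_of_mul_eq_one h1
  -- conjugated characters
  have hconj : ∀ (g : G) (k : K), (g⁻¹ * (k : G) * g) ∈ K := by
    intro g k
    simpa using hKn.conj_mem (k : G) k.2 g⁻¹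
  set chi : G → K → F := fun g k => lam ⟨g⁻¹ * (k : G) * g, hconj g k⟩ with hchi
  have hchimul : ∀ (g : G) (k k' : K), chi g (k * k') = chi g k * chi g k' := by
    intro g k k'
    rw [hchi]
    simp only
    rw [← map_mul]
    congr 1
    ext
    push_cast
    group
  have hchi0 : ∀ (g : G) (k : K), chi g k ≠ 0 := fun g k => hlam0 _
  have heig : ∀ (g : G) (k : K), ρ (k : G) (ρ g w) = chi g k • ρ g w := by
    intro g k
    have h1 : (k : G) * g = g * (g⁻¹ * (k : G) * g) := by group
    calc ρ (k : G) (ρ g w) = ρ ((k : G) * g) w := by rw [map_mul]; rfl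
      _ = ρ g (ρ (g⁻¹ * (k : G) * g) w) := by rw [h1, map_mul]; rfl
      _ = ρ g (lam ⟨_, hconj g k⟩ • w) := by rw [hcw' ⟨_, hconj g k⟩]
      _ = chi g k • ρ g w := by rw [map_smul]
  -- Step 2: the orbit of w spans V (irreducibility)
  set S : Submodule F V := Submodule.span F (Set.range fun g : G => ρ g w) with hS
  have hSG : ∀ (g : G), ∀ x ∈ S, ρ g x ∈ S := by
    intro g x hx
    have hmap : Submodule.map (ρ g) S ≤ S := by
      rw [hS, Submodule.map_span, Submodule.span_le]
      rintro _ ⟨_, ⟨g', rfl⟩, rfl⟩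
      apply Submodule.subset_span
      refine ⟨g * g', ?_⟩
      show ρ (g * g') w = ρ g (ρ g' w)
      rw [map_mul]; rfl
    exact hmap ⟨x, hx, rfl⟩
  have hStop : S = ⊤ := by
    set N : Submodule (MonoidAlgebra F G) ρ.asModule :=
      { carrier := (S : Set V)
        add_mem' := fun ha hb => S.add_mem ha hb
        zero_mem' := S.zero_mem
        smul_mem' := by
          intro r x hx
          show ρ.asAlgebraHom r x ∈ S
          induction r using MonoidAlgebra.induction_on with
          | of g => rw [Representation.asAlgebraHom_of]; exact hSG g x hx
          | add f g hf hg => rw [map_add]; exact S.add_mem hf hg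
          | smul a f hf => rw [map_smul]; exact S.smul_mem a hf } with hN
    have hwN : (w : ρ.asModule) ∈ N := by
      show w ∈ S
      refine Submodule.subset_span ⟨1, ?_⟩
      show ρ (1 : G) w = w
      rw [map_one]; rfl
    have hN0 : N ≠ ⊥ := by
      intro h
      rw [h] at hwN
      exact hw0 hwN
    have hNtop : N = ⊤ := (hirr.eq_bot_or_eq_top N).resolve_left hN0
    have h8 : (N : Set ρ.asModule) = Set.univ := by rw [hNtop]; rfl
    apply Submodule.eq_top_iff'.mpr
    intro x
    have h9 : x ∈ (N : Set ρ.asModule) := by rw [h8]; trivial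
    exact h9
  -- Step 3: the stabilizer of lam is K
  have hHK : ∀ h : G, (∀ k : K, chi h k = lam k) → h ∈ K := by
    intro h hh
    -- h commutes with every element of K
    have hcomm : ∀ k₀ : G, k₀ ∈ K → h * k₀ = k₀ * h := by
      intro k₀ hk₀
      have hc₀K : h * k₀ * h⁻¹ * k₀⁻¹ ∈ K := by
        have h2 : ⁅h, k₀⁆ ∈ commutator G := by
          rw [commutator_def]
          exact Subgroup.commutator_mem_commutator (Subgroup.mem_top h) (Subgroup.mem_top k₀)
        exact hGK h2
      -- show ρ of the commutator is the identity
      have hid : ρ (h * k₀ * h⁻¹ * k₀⁻¹) = ρ 1 := by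
        rw [map_one]
        apply LinearMap.ext_on_range hStop
        intro g
        rw [Module.End.one_apply]
        rw [heig g ⟨h * k₀ * h⁻¹ * k₀⁻¹, hc₀K⟩]
        have hyK : g⁻¹ * k₀ * g ∈ K := by simpa using hKn.conj_mem k₀ hk₀ g⁻¹
        have hdK : h⁻¹ * g⁻¹ * h * g ∈ K := by
          apply hGK
          have h2 : ⁅h⁻¹, g⁻¹⁆ ∈ commutator G := by
            rw [commutator_def]
            exact Subgroup.commutator_mem_commutator (Subgroup.mem_top _) (Subgroup.mem_top _)
          simpa [commutatorElement_def, mul_assoc] using h2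
        have hhyK : h * (g⁻¹ * k₀ * g) * h⁻¹ ∈ K := hKn.conj_mem _ hyK h
        -- the key group computation
        have key : g⁻¹ * (h * k₀ * h⁻¹ * k₀⁻¹) * g
            = (h * (g⁻¹ * k₀ * g) * h⁻¹) * (g⁻¹ * k₀ * g)⁻¹ := by
          have hdy : (h⁻¹ * g⁻¹ * h * g) * (g⁻¹ * k₀ * g)
              = (g⁻¹ * k₀ * g) * (h⁻¹ * g⁻¹ * h * g) := hKab _ _ hdK hyK
          calc g⁻¹ * (h * k₀ * h⁻¹ * k₀⁻¹) * g
              = h * ((h⁻¹ * g⁻¹ * h * g) * (g⁻¹ * k₀ * g)) * ((h⁻¹ * g⁻¹ * h * g)⁻¹ * h⁻¹)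
                * (g⁻¹ * k₀ * g)⁻¹ := by group
            _ = h * ((g⁻¹ * k₀ * g) * (h⁻¹ * g⁻¹ * h * g)) * ((h⁻¹ * g⁻¹ * h * g)⁻¹ * h⁻¹)
                * (g⁻¹ * k₀ * g)⁻¹ := by rw [hdy]
            _ = (h * (g⁻¹ * k₀ * g) * h⁻¹) * (g⁻¹ * k₀ * g)⁻¹ := by group
        have hchival : chi g ⟨h * k₀ * h⁻¹ * k₀⁻¹, hc₀K⟩ = 1 := by
          rw [hchi]
          simp only
          have e2 : (⟨g⁻¹ * ((⟨h * k₀ * h⁻¹ * k₀⁻¹, hc₀K⟩ : K) : G) * g, hconj g _⟩ : K)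
              = ⟨h * (g⁻¹ * k₀ * g) * h⁻¹, hhyK⟩ * (⟨g⁻¹ * k₀ * g, hyK⟩)⁻¹ := by
            ext
            push_cast
            rw [key]
          rw [e2, map_mul]
          -- lam (h y h⁻¹) = lam y from the stabilizer hypothesis
          have e3 : lam ⟨h * (g⁻¹ * k₀ * g) * h⁻¹, hhyK⟩ = lam ⟨g⁻¹ * k₀ * g, hyK⟩ := by
            have e4 := hh ⟨h * (g⁻¹ * k₀ * g) * h⁻¹, hhyK⟩
            rw [hchi] at e4
            simp only at e4
            rw [← e4]
            congr 1
            ext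
            push_cast
            group
          rw [e3, ← map_mul, mul_inv_cancel, map_one]
        rw [hchival, one_smul]
      have h5 : h * k₀ * h⁻¹ * k₀⁻¹ = 1 := hfaith hid
      calc h * k₀ = (h * k₀ * h⁻¹ * k₀⁻¹) * (k₀ * h) := by group
        _ = k₀ * h := by rw [h5, one_mul]
    -- the subgroup generated by h and K is abelian and normal
    set K' : Subgroup G := Subgroup.zpowers h ⊔ K with hK'
    have hmemK' : ∀ x ∈ K', ∃ (n : ℤ) (k : G), k ∈ K ∧ x = h ^ n * k := by
      intro x hx
      have h2 : x ∈ (Subgroup.zpowers h : Set G) * (K : Set G) := by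
        rw [← Subgroup.mul_normal]
        exact hx
      obtain ⟨a, ha, b, hb, rfl⟩ := h2
      obtain ⟨n, rfl⟩ := Subgroup.mem_zpowers_iff.mp ha
      exact ⟨n, b, hb, rfl⟩
    have hK'ab : ∀ a b : G, a ∈ K' → b ∈ K' → a * b = b * a := by
      intro a b ha hb
      obtain ⟨m, ka, hka, rfl⟩ := hmemK' a ha
      obtain ⟨n, kb, hkb, rfl⟩ := hmemK' b hb
      have c1 : Commute h ka := hcomm ka hka
      have c2 : Commute h kb := hcomm kb hkb
      have c3 : Commute ka kb := hKab ka kb hka hkb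
      exact (Commute.mul_left
        (((Commute.refl h).zpow_zpow m n).mul_right (c2.zpow_left m))
        ((c1.symm.zpow_right n).mul_right c3)).eq
    have hK'n : K'.Normal := by
      constructor
      intro x hx g
      obtain ⟨n, k, hk, rfl⟩ := hmemK' x hx
      have hghg : g * h * g⁻¹ ∈ K' := by
        have h2 : g * h * g⁻¹ * h⁻¹ ∈ K := by
          apply hGK
          have h3 : ⁅g, h⁆ ∈ commutator G := by
            rw [commutator_def]
            exact Subgroup.commutator_mem_commutator (Subgroup.mem_top _) (Subgroup.mem_top _)
          simpa [commutatorElement_def, mul_assoc] using h3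
        have h4 : g * h * g⁻¹ = (g * h * g⁻¹ * h⁻¹) * h := by group
        rw [h4]
        exact Subgroup.mul_mem _ (Subgroup.mem_sup_right h2)
          (Subgroup.mem_sup_left (Subgroup.mem_zpowers h))
      have h6 : g * (h ^ n * k) * g⁻¹ = (g * h * g⁻¹) ^ n * (g * k * g⁻¹) := by
        rw [← MulAut.conj_apply, map_mul, map_zpow]
        rfl
      rw [h6]
      exact Subgroup.mul_mem _ (Subgroup.zpow_mem _ hghg n)
        (Subgroup.mem_sup_right (hKn.conj_mem k hk g))
    have hK'K : K' = K := hmax K' hK'n hK'ab le_sup_right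
    rw [← hK'K]
    exact Subgroup.mem_sup_left (Subgroup.mem_zpowers h)
  -- Step 4: build a basis indexed by G ⧸ K
  haveI : Fintype (G ⧸ K) := Fintype.ofFinite _
  set b : G ⧸ K → V := fun q => ρ q.out w with hb
  -- distinct cosets give distinct characters
  have hchiinj : ∀ q q' : G ⧸ K, (∀ k : K, chi q.out k = chi q'.out k) → q = q' := by
    intro q q' hqq'
    have hmemH : ∀ k : K, chi (q'.out⁻¹ * q.out) k = lam k := by
      intro k
      have h2 : q'.out * (k : G) * q'.out⁻¹ ∈ K := hKn.conj_mem _ k.2 _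
      have h3 := hqq' (⟨q'.out * (k : G) * q'.out⁻¹, h2⟩ : K)
      rw [hchi] at h3 ⊢
      simp only at h3 ⊢
      have e1 : (⟨q'.out⁻¹ * ((⟨q'.out * (k : G) * q'.out⁻¹, h2⟩ : K) : G) * q'.out,
          hconj _ _⟩ : K) = k := by
        ext
        push_cast
        group
      rw [e1] at h3
      rw [← h3]
      congr 1
      ext
      push_cast
      group
    have h4 : q'.out⁻¹ * q.out ∈ K := hHK _ hmemH
    have h5 : (q'.out : G ⧸ K) = (q.out : G ⧸ K) := QuotientGroup.eq.mpr h4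
    rw [QuotientGroup.out_eq', QuotientGroup.out_eq'] at h5
    exact h5.symm
  -- spanning
  have hspan : Submodule.span F (Set.range b) = ⊤ := by
    rw [eq_top_iff, ← hStop, hS, Submodule.span_le]
    rintro _ ⟨g, rfl⟩
    show (ρ g) w ∈ (Submodule.span F (Set.range b) : Set V)
    have hgk : ((g : G ⧸ K)).out⁻¹ * g ∈ K := by
      rw [← QuotientGroup.eq, QuotientGroup.out_eq']
    have e1 : ρ g w = lam ⟨_, hgk⟩ • b ((g : G ⧸ K)) := by
      rw [hb]
      have h2 : g = ((g : G ⧸ K)).out * (((g : G ⧸ K)).out⁻¹ * g) := by group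
      calc ρ g w = ρ (((g : G ⧸ K)).out * (((g : G ⧸ K)).out⁻¹ * g)) w := by rw [← h2]
        _ = ρ ((g : G ⧸ K)).out (ρ (((g : G ⧸ K)).out⁻¹ * g) w) := by rw [map_mul]; rfl
        _ = ρ ((g : G ⧸ K)).out (lam ⟨_, hgk⟩ • w) := by rw [hcw' ⟨_, hgk⟩]
        _ = lam ⟨_, hgk⟩ • ρ ((g : G ⧸ K)).out w := by rw [map_smul]
    rw [SetLike.mem_coe, e1]
    exact Submodule.smul_mem _ _ (Submodule.subset_span ⟨(g : G ⧸ K), rfl⟩)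
  -- b q ≠ 0
  have hbne : ∀ q : G ⧸ K, b q ≠ 0 := by
    intro q hq
    apply hw0
    have h2 : ρ q.out⁻¹ (ρ q.out w) = 0 := by
      have e5 : b q = ρ q.out w := rfl
      rw [← e5, hq, map_zero]
    rw [← Module.End.mul_apply, ← map_mul, inv_mul_cancel, map_one, Module.End.one_apply] at h2
    exact h2
  -- linear independence via projections
  haveI : Fintype K := Fintype.ofFinite _
  have hli : LinearIndependent F b := by
    rw [Fintype.linearIndependent_iff]
    intro cc hcc q₀
    set P : Module.End F V := ∑ k : K, (chi q₀.out k)⁻¹ • (ρ (k : G) : Module.End F V) with hP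
    have hPb : ∀ q : G ⧸ K, P (b q) = (∑ k : K, (chi q₀.out k)⁻¹ * chi q.out k) • b q := by
      intro q
      rw [hP, LinearMap.sum_apply, Finset.sum_smul]
      refine Finset.sum_congr rfl (fun k _ => ?_)
      rw [LinearMap.smul_apply, hb, heig q.out k, smul_smul]
    have hT0 : ∀ q : G ⧸ K, q ≠ q₀ → (∑ k : K, (chi q₀.out k)⁻¹ * chi q.out k) = 0 := by
      intro q hq
      have hmulpsi : ∀ a b : K, (chi q₀.out (a * b))⁻¹ * chi q.out (a * b)
          = ((chi q₀.out a)⁻¹ * chi q.out a) * ((chi q₀.out b)⁻¹ * chi q.out b) := by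
        intro a b
        rw [hchimul, hchimul, mul_inv]
        ring
      have hnot : ¬ (∀ k : K, (chi q₀.out k)⁻¹ * chi q.out k = 1) := by
        intro hall
        apply hq
        apply hchiinj
        intro k
        have h2 := hall k
        rw [inv_mul_eq_one₀ (hchi0 _ _)] at h2
        exact h2.symm
      push_neg at hnot
      obtain ⟨k1, hk1⟩ := hnot
      exact aux_charsum _ hmulpsi k1 hk1
    have hTq₀ : (∑ k : K, (chi q₀.out k)⁻¹ * chi q₀.out k) = (Fintype.card K : F) := by
      rw [Finset.sum_congr rfl (fun k _ => inv_mul_cancel₀ (hchi0 q₀.out k))]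
      rw [Finset.sum_const, Finset.card_univ, nsmul_eq_mul, mul_one]
    have h3 : ∑ q : G ⧸ K, (cc q * (∑ k : K, (chi q₀.out k)⁻¹ * chi q.out k)) • b q = 0 := by
      have h4 : P (∑ q : G ⧸ K, cc q • b q) = 0 := by rw [hcc, map_zero]
      rw [map_sum] at h4
      rw [← h4]
      refine Finset.sum_congr rfl (fun q _ => ?_)
      rw [map_smul, hPb, smul_smul]
    rw [Finset.sum_eq_single q₀ (fun q _ hq => by rw [hT0 q hq, mul_zero, zero_smul])
      (fun h => absurd (Finset.mem_univ q₀) h)] at h3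
    rw [hTq₀] at h3
    rcases smul_eq_zero.mp h3 with h | h
    · rcases mul_eq_zero.mp h with h | h
      · exact h
      · exact absurd h (Nat.cast_ne_zero.mpr Fintype.card_ne_zero)
    · exact absurd h (hbne q₀)
  -- conclude
  refine ⟨lam, Submodule.span F {w}, ?_, ?_, ?_⟩
  · exact finrank_span_singleton hw0
  · intro k w' hw'
    obtain ⟨a, rfl⟩ := Submodule.mem_span_singleton.mp hw'
    rw [map_smul, hcw' k, smul_smul, smul_smul, mul_comm]
  · have hbasis : Module.finrank F V = Fintype.card (G ⧸ K) := by
      rw [Module.finrank_eq_card_basis (Basis.mk hli (by rw [hspan]))]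
    rw [hbasis, Subgroup.index, Nat.card_eq_fintype_card]
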